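/- Let φ be a flow on a compact metric space M and let C' ⊆ M be a compact set with φ_t(C') = C' for all t ∈ ℝ which is an attracting center for φ, i.e., for every x ∈ M, lim_{δ→0} liminf_{t→+∞} (1/t)∫₀ᵗ χ_{B(C',δ)}(φ_s(x)) ds = 1, where B(C',δ) = {y ∈ M : dist(y,C') < δ} and χ_A is the indicator function of A. Then for every φ-invariant ergodic Borel probability measure μ one has μ(C') = 1 and supp(μ) ⊆ C'; consequently the closure of the union of the supports of all φ-invariant ergodic Borel probability measures is contained in C'. -/

import Mathlib

open MeasureTheory
open scoped ENNReal NNReal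

/-- The (topological) support of a measure: the set of points all of whose open
neighbourhoods have positive measure. -/
def measureSupport {M : Type*} [TopologicalSpace M] [MeasurableSpace M]
    (μ : Measure M) : Set M :=
  {x : M | ∀ U : Set M, IsOpen U → x ∈ U → 0 < μ U}

/-- If `C'` is a compact, flow-invariant attracting center for a flow `φ`
on a compact metric space, then every `φ`-invariant ergodic Borel probability measure `μ`
satisfies `μ C' = 1` and `supp μ ⊆ C'`; consequently the closure of the union of the
supports of all such measures is contained in `C'`. -/
theorem ergodic_measures_supported_in_attracting_center
    {M : Type*} [MetricSpace M] [CompactSpace M] [MeasurableSpace M] [BorelSpace M]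
    (φ : ℝ → M → M)
    (hcont : Continuous fun q : M × ℝ => φ q.2 q.1)
    (h0 : ∀ x, φ 0 x = x)
    (hadd : ∀ s t : ℝ, ∀ x, φ t (φ s x) = φ (s + t) x)
    (C' : Set M) (hC'comp : IsCompact C')
    (hC'inv : ∀ t : ℝ, φ t '' C' = C')
    (hattract : ∀ x : M,
      Filter.Tendsto
        (fun δ : ℝ => Filter.liminf
          (fun t : ℝ => (1 / t) *
            ∫ s in (0 : ℝ)..t,
              (Metric.thickening δ C').indicator (fun _ => (1 : ℝ)) (φ s x))
          Filter.atTop)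
        (nhdsWithin 0 (Set.Ioi 0)) (nhds 1)) :
    (∀ μ : Measure M, IsProbabilityMeasure μ →
      (∀ t : ℝ, MeasurePreserving (φ t) μ μ) →
      (∀ B : Set M, MeasurableSet B → (∀ t : ℝ, φ t ⁻¹' B = B) → μ B = 0 ∨ μ B = 1) →
      μ C' = 1 ∧ measureSupport μ ⊆ C') ∧
    closure (⋃ μ ∈ {μ : Measure M | IsProbabilityMeasure μ ∧
        (∀ t : ℝ, MeasurePreserving (φ t) μ μ) ∧
        (∀ B : Set M, MeasurableSet B → (∀ t : ℝ, φ t ⁻¹' B = B) → μ B = 0 ∨ μ B = 1)},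
      measureSupport μ) ⊆ C' := by
  classical
  have hC'closed : IsClosed C' := hC'comp.isClosed
  have hflowcont : ∀ x : M, Continuous fun s : ℝ => φ s x := fun x =>
    hcont.comp (continuous_const.prodMk continuous_id)
  -- the pointwise time-average function
  set A : M → ℝ → ℝ → ℝ := fun x δ' t => (1 / t) *
      ∫ s in (0 : ℝ)..t,
        (Metric.thickening δ' C').indicator (fun _ => (1 : ℝ)) (φ s x) with hA
  -- basic facts about A
  have hII : ∀ x : M, ∀ δ' t : ℝ, IntervalIntegrable
      (fun s => (Metric.thickening δ' C').indicator (fun _ => (1 : ℝ)) (φ s x)) volume 0 t := by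
    intro x δ' t
    have hmeas : Measurable fun s : ℝ =>
        (Metric.thickening δ' C').indicator (fun _ => (1 : ℝ)) (φ s x) :=
      (measurable_const.indicator Metric.isOpen_thickening.measurableSet).comp
        (hflowcont x).measurable
    rw [intervalIntegrable_iff]
    haveI : IsFiniteMeasure (volume.restrict (Set.uIoc (0:ℝ) t)) :=
      ⟨by rw [Measure.restrict_apply_univ]; exact measure_Ioc_lt_top⟩
    refine (integrable_const (1 : ℝ)).mono' hmeas.aestronglyMeasurable.restrict ?_
    refine Filter.Eventually.of_forall fun s => ?_
    by_cases h : φ s x ∈ Metric.thickening δ' C' <;> simp [Set.indicator, h]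
  have hA_nonneg : ∀ x : M, ∀ δ' t : ℝ, 0 < t → 0 ≤ A x δ' t := by
    intro x δ' t ht
    refine mul_nonneg (by positivity) ?_
    refine intervalIntegral.integral_nonneg ht.le fun u _ => ?_
    exact Set.indicator_nonneg (fun _ _ => zero_le_one) _
  have hA_le_one : ∀ x : M, ∀ δ' t : ℝ, 0 < t → A x δ' t ≤ 1 := by
    intro x δ' t ht
    have h1 : (∫ s in (0:ℝ)..t,
        (Metric.thickening δ' C').indicator (fun _ => (1 : ℝ)) (φ s x)) ≤ ∫ _ in (0:ℝ)..t, (1:ℝ) :=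
      intervalIntegral.integral_mono_on ht.le (hII x δ' t) intervalIntegrable_const
        (fun u _ => Set.indicator_le_self' (fun _ _ => zero_le_one) _)
    have h2 : A x δ' t ≤ (1 / t) * (t * 1) := by
      rw [hA]
      simp only [intervalIntegral.integral_const, smul_eq_mul, sub_zero] at h1 ⊢
      exact mul_le_mul_of_nonneg_left h1 (by positivity)
    calc A x δ' t ≤ (1/t) * (t*1) := h2
      _ = 1 := by field_simp
  have hmonoA : ∀ x : M, ∀ δ' δ'' t : ℝ, δ' ≤ δ'' → 0 < t → A x δ' t ≤ A x δ'' t := by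
    intro x δ' δ'' t hle ht
    refine mul_le_mul_of_nonneg_left ?_ (by positivity)
    refine intervalIntegral.integral_mono_on ht.le (hII x δ' t) (hII x δ'' t) fun u _ => ?_
    exact Set.indicator_le_indicator_of_subset (Metric.thickening_mono hle C')
      (fun _ => zero_le_one) _
  -- boundedness helpers over ℝ atTop
  have hBdd_ge : ∀ x δ', Filter.IsBoundedUnder (· ≥ ·) Filter.atTop (fun t => A x δ' t) := by
    intro x δ'
    refine ⟨0, ?_⟩
    rw [Filter.eventually_map]
    filter_upwards [Filter.eventually_gt_atTop (0:ℝ)] with t ht using hA_nonneg x δ' t ht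
  have hBdd_le : ∀ x δ', Filter.IsBoundedUnder (· ≤ ·) Filter.atTop (fun t => A x δ' t) := by
    intro x δ'
    refine ⟨1, ?_⟩
    rw [Filter.eventually_map]
    filter_upwards [Filter.eventually_gt_atTop (0:ℝ)] with t ht using hA_le_one x δ' t ht
  -- the key real liminf lower bound over ℕ
  have hNat : ∀ x : M, ∀ δ : ℝ, 0 < δ →
      (1 : ℝ) ≤ Filter.liminf (fun n : ℕ => A x δ n) Filter.atTop := by
    intro x δ hδ
    have hL : (1 : ℝ) ≤ Filter.liminf (fun t : ℝ => A x δ t) Filter.atTop := by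
      refine le_of_tendsto (hattract x) ?_
      filter_upwards [Ioc_mem_nhdsGT_of_mem (Set.left_mem_Ico.mpr hδ)] with δ' hδ'
      refine Filter.liminf_le_liminf ?_ (hBdd_ge x δ') ((hBdd_le x δ).isCoboundedUnder_ge)
      filter_upwards [Filter.eventually_gt_atTop (0:ℝ)] with t ht
      exact hmonoA x δ' δ t hδ'.2 ht
    refine le_trans hL ?_
    have hmap : Filter.map (Nat.cast : ℕ → ℝ) Filter.atTop ≤ Filter.atTop :=
      tendsto_natCast_atTop_atTop
    have hcob : Filter.IsCoboundedUnder (· ≥ ·) (Filter.map (Nat.cast : ℕ → ℝ) Filter.atTop)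
        (fun t => A x δ t) := by
      refine Filter.IsBoundedUnder.isCoboundedUnder_ge ⟨1, ?_⟩
      rw [Filter.eventually_map, Filter.eventually_map]
      filter_upwards [Filter.eventually_ge_atTop 1] with n hn
      exact hA_le_one x δ n (by exact_mod_cast hn)
    have h := Filter.liminf_le_liminf_of_le hmap (hBdd_ge x δ) hcob
    rwa [show Filter.liminf (fun t : ℝ => A x δ t) (Filter.map (Nat.cast : ℕ → ℝ) Filter.atTop)
        = Filter.liminf (fun n : ℕ => A x δ (n : ℝ)) Filter.atTop from by
      rw [Filter.liminf, Filter.liminf, Filter.map_map]; rfl] at h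
  -- the main statement for a single invariant probability measure
  have main : ∀ μ : Measure M, IsProbabilityMeasure μ →
      (∀ t : ℝ, MeasurePreserving (φ t) μ μ) → μ C' = 1 ∧ measureSupport μ ⊆ C' := by
    intro μ hprob hpres
    have key : ∀ δ : ℝ, 0 < δ → μ (Metric.thickening δ C') = 1 := by
      intro δ hδ
      set U := Metric.thickening δ C' with hUdef
      have hUopen : IsOpen U := Metric.isOpen_thickening
      set F : M → ℝ → ℝ≥0∞ := fun x s => U.indicator (fun _ => (1:ℝ≥0∞)) (φ s x) with hF
      have hFmeas : Measurable (Function.uncurry F) := by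
        have : Function.uncurry F =
            (U.indicator (fun _ => (1:ℝ≥0∞))) ∘ (fun p : M × ℝ => φ p.2 p.1) := rfl
        rw [this]
        exact (measurable_const.indicator hUopen.measurableSet).comp hcont.measurable
      set G : ℕ → M → ℝ≥0∞ :=
        fun n x => (ENNReal.ofReal n)⁻¹ * ∫⁻ s in Set.Ioc (0:ℝ) (n:ℝ), F x s with hG
      have hGmeas : ∀ n, Measurable (G n) := fun n =>
        (Measurable.lintegral_prod_right hFmeas).const_mul _
      have hGint : ∀ n : ℕ, 1 ≤ n → ∫⁻ x, G n x ∂μ = μ U := by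
        intro n hn
        have hn0 : (0:ℝ) < n := by exact_mod_cast hn
        have hswap : ∫⁻ x, (∫⁻ s in Set.Ioc (0:ℝ) (n:ℝ), F x s) ∂μ
            = ∫⁻ s in Set.Ioc (0:ℝ) (n:ℝ), (∫⁻ x, F x s ∂μ) :=
          lintegral_lintegral_swap hFmeas.aemeasurable
        have hinner : ∀ s : ℝ, ∫⁻ x, F x s ∂μ = μ U := by
          intro s
          have h1 : (fun x => F x s) = (φ s ⁻¹' U).indicator (fun _ => (1:ℝ≥0∞)) := by
            funext x
            by_cases h : φ s x ∈ U <;> simp [hF, Set.indicator, h, Set.mem_preimage]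
          rw [h1, lintegral_indicator (hUopen.measurableSet.preimage (hpres s).measurable),
            setLIntegral_one]
          exact (hpres s).measure_preimage hUopen.measurableSet.nullMeasurableSet
        calc ∫⁻ x, G n x ∂μ
            = (ENNReal.ofReal n)⁻¹ * ∫⁻ x, (∫⁻ s in Set.Ioc (0:ℝ) (n:ℝ), F x s) ∂μ :=
              lintegral_const_mul _ (Measurable.lintegral_prod_right hFmeas)
          _ = (ENNReal.ofReal n)⁻¹ * ∫⁻ _ in Set.Ioc (0:ℝ) (n:ℝ), μ U := by
              rw [hswap]; exact congrArg _ (lintegral_congr fun s => hinner s)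
          _ = (ENNReal.ofReal n)⁻¹ * (ENNReal.ofReal n * μ U) := by
              rw [setLIntegral_const, Real.volume_Ioc, sub_zero, mul_comm (μ U)]
          _ = μ U := by
              rw [← mul_assoc, ENNReal.inv_mul_cancel (by simpa using hn0.ne') ENNReal.ofReal_ne_top,
                one_mul]
      -- pointwise: G n x = ofReal (A x δ n) for n ≥ 1
      have hGeq : ∀ x : M, ∀ n : ℕ, 1 ≤ n → G n x = ENNReal.ofReal (A x δ n) := by
        intro x n hn
        have hn0 : (0:ℝ) < n := by exact_mod_cast hn
        have hint : IntegrableOn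
            (fun s => (Metric.thickening δ C').indicator (fun _ => (1 : ℝ)) (φ s x))
            (Set.Ioc (0:ℝ) (n:ℝ)) volume := by
          have := hII x δ (n:ℝ)
          rwa [intervalIntegrable_iff, Set.uIoc_of_le hn0.le] at this
        have hofI : ENNReal.ofReal
            (∫ s in (0:ℝ)..(n:ℝ),
              (Metric.thickening δ C').indicator (fun _ => (1 : ℝ)) (φ s x))
            = ∫⁻ s in Set.Ioc (0:ℝ) (n:ℝ), F x s := by
          rw [intervalIntegral.integral_of_le hn0.le,
            ofReal_integral_eq_lintegral_ofReal hint
              (Filter.Eventually.of_forall fun s =>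
                Set.indicator_nonneg (fun _ _ => zero_le_one) _)]
          refine lintegral_congr fun s => ?_
          by_cases h : φ s x ∈ Metric.thickening δ C' <;> simp [hF, hUdef, Set.indicator, h]
        rw [hA, ENNReal.ofReal_mul (by positivity : (0:ℝ) ≤ 1 / n), hofI, one_div,
          ENNReal.ofReal_inv_of_pos hn0]
      -- liminf lower bound in ℝ≥0∞
      have hlim : ∀ x : M, (1 : ℝ≥0∞) ≤ Filter.liminf (fun n : ℕ => G n x) Filter.atTop := by
        intro x
        have hBddNat : Filter.IsBoundedUnder (· ≥ ·) Filter.atTop (fun n : ℕ => A x δ n) := by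
          refine ⟨0, ?_⟩
          rw [Filter.eventually_map]
          filter_upwards [Filter.eventually_ge_atTop 1] with n hn
          exact hA_nonneg x δ n (by exact_mod_cast hn)
        rw [Filter.le_liminf_iff]
        intro b hb
        have hb' : b ≠ ⊤ := ne_top_of_lt hb
        have hbt : b.toReal < 1 := by
          have := ENNReal.toReal_lt_toReal hb' ENNReal.one_ne_top |>.mpr hb
          simpa using this
        have hev : ∀ᶠ n : ℕ in Filter.atTop, b.toReal < A x δ n :=
          Filter.eventually_lt_of_lt_liminf (lt_of_lt_of_le hbt (hNat x δ hδ)) hBddNat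
        filter_upwards [hev, Filter.eventually_ge_atTop 1] with n h1 h2
        rw [hGeq x n h2]
        exact (ENNReal.lt_ofReal_iff_toReal_lt hb').mpr h1
      have hgeone : (1 : ℝ≥0∞) ≤ μ U := by
        calc (1 : ℝ≥0∞) = ∫⁻ _, 1 ∂μ := by simp
          _ ≤ ∫⁻ x, Filter.liminf (fun n : ℕ => G n x) Filter.atTop ∂μ := lintegral_mono hlim
          _ ≤ Filter.liminf (fun n => ∫⁻ x, G n x ∂μ) Filter.atTop := lintegral_liminf_le hGmeas
          _ = μ U := by
              have heq : (fun n : ℕ => ∫⁻ x, G n x ∂μ) =ᶠ[Filter.atTop] fun _ => μ U := by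
                filter_upwards [Filter.eventually_ge_atTop 1] with n hn using hGint n hn
              rw [Filter.liminf_congr heq, Filter.liminf_const]
      exact le_antisymm prob_le_one hgeone
    -- conclude μ C' = 1
    have hCsub : C' = ⋂ n : ℕ, Metric.thickening (1/((n:ℝ)+1)) C' := by
      apply Set.Subset.antisymm
      · exact Set.subset_iInter fun n => Metric.self_subset_thickening (by positivity) C'
      · intro x hx
        rw [← hC'closed.closure_eq, Metric.mem_closure_iff]
        intro ε hε
        obtain ⟨n, hn⟩ := exists_nat_one_div_lt hε
        obtain ⟨z, hz, hdz⟩ := Metric.mem_thickening_iff.mp (Set.mem_iInter.mp hx n)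
        exact ⟨z, hz, hdz.trans hn⟩
    have hcompl : μ C'ᶜ = 0 := by
      rw [hCsub, Set.compl_iInter]
      refine measure_iUnion_null fun n => ?_
      rw [measure_compl Metric.isOpen_thickening.measurableSet (measure_ne_top μ _),
        key (1/((n:ℝ)+1)) (by positivity), measure_univ, tsub_self]
    have hμC : μ C' = 1 := by
      have h := measure_add_measure_compl (μ := μ) hC'closed.measurableSet
      rw [hcompl, add_zero, measure_univ] at h
      exact h
    refine ⟨hμC, fun x hx => ?_⟩
    by_contra hxC
    have h0' := hx C'ᶜ hC'closed.isOpen_compl hxC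
    rw [hcompl] at h0'
    exact lt_irrefl 0 h0'
  refine ⟨fun μ h1 h2 _ => main μ h1 h2, ?_⟩
  refine closure_minimal ?_ hC'closed
  exact Set.iUnion₂_subset fun μ hμ => (main μ hμ.1 hμ.2.1).2
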